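/- Let f : A ⥤ B be a Grothendieck fibration and let π₀ denote the connected-components reflection of categories into discrete categories applied fibrewise: define Q to be the category obtained from the fibration B ↓ f by identifying, in each fibre over b ∈ B, objects in the same connected component (i.e. Q is the Grothendieck construction of b ↦ π₀(fibre of f over b) viewed via the pseudofunctor associated to f). Then the induced comparison functor s : Q ⥤ B is a discrete fibration, and the canonical functor q : A ⥤ Q satisfies s ∘ q = f. -/

import Mathlib

open CategoryTheory

universe v₁ v₂ v₃ u₁ u₂ u₃

section Defs

variable {A : Type u₁} {B : Type u₂} [Category.{v₁} A] [Category.{v₂} B]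

/-- `f` is a discrete fibration: every `β : b ⟶ f a` admits a unique lift with codomain `a`. -/
def IsDiscreteFibration (f : A ⥤ B) : Prop :=
  ∀ (a : A) (b : B) (β : b ⟶ f.obj a),
    ∃! l : (a' : A) × (a' ⟶ a),
      ∃ h : f.obj l.1 = b, f.map l.2 = eqToHom h ≫ β

/-- `α : a' ⟶ a` is `f`-cartesian. -/
def IsCartesian (f : A ⥤ B) {a' a : A} (α : a' ⟶ a) : Prop :=
  ∀ {y : A} (τ' : y ⟶ a) (g : f.obj y ⟶ f.obj a'),
    f.map τ' = g ≫ f.map α →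
      ∃! τ : y ⟶ a', f.map τ = g ∧ τ ≫ α = τ'

/-- `f` is a Grothendieck fibration. -/
def IsGrothendieckFibration (f : A ⥤ B) : Prop :=
  ∀ (a : A) (b : B) (β : b ⟶ f.obj a),
    ∃ (a' : A) (α : a' ⟶ a) (h : f.obj a' = b),
      f.map α = eqToHom h ≫ β ∧ IsCartesian f α

end Defs

namespace Stmt13Aux

variable {A : Type u₁} {B : Type u₂} [Category.{v₁} A] [Category.{v₂} B]
variable (f : A ⥤ B)

/-- There is a vertical morphism `a ⟶ a'`. -/
def Vert (a a' : A) : Prop := ∃ (u : a ⟶ a') (h : f.obj a = f.obj a'), f.map u = eqToHom h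

abbrev VRel : A → A → Prop := Relation.EqvGen (Vert f)

lemma VRel.ofVert {a a' : A} (h : Vert f a a') : VRel f a a' := Relation.EqvGen.rel _ _ h
lemma VRel.refl {a : A} : VRel f a a := Relation.EqvGen.refl a
lemma VRel.symm {a a' : A} (h : VRel f a a') : VRel f a' a := Relation.EqvGen.symm _ _ h
lemma VRel.trans {a a' a'' : A} (h : VRel f a a') (h' : VRel f a' a'') : VRel f a a'' :=
  Relation.EqvGen.trans _ _ _ h h'

abbrev Kills {X : Type u₃} [Category.{v₃} X] (t : A ⥤ X) : Prop :=
  ∀ {a a' : A} (u : a ⟶ a') (h : f.obj a = f.obj a'), f.map u = eqToHom h →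
    ∃ e : t.obj a = t.obj a', t.map u = eqToHom e

lemma kills_self : Kills f f := fun _ h hu => ⟨h, hu⟩

lemma kills_obj {X : Type u₃} [Category.{v₃} X] {t : A ⥤ X} (ht : Kills f t)
    {a a' : A} (h : VRel f a a') : t.obj a = t.obj a' := by
  induction h with
  | rel x y h => obtain ⟨u, h, hu⟩ := h; exact (ht u h hu).1
  | refl x => rfl
  | symm x y _ ih => exact ih.symm
  | trans x y z _ _ ih₁ ih₂ => exact ih₁.trans ih₂

lemma vrel_fobj {a a' : A} (h : VRel f a a') : f.obj a = f.obj a' :=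
  kills_obj f (kills_self f) h

end Stmt13Aux
namespace Stmt13Aux
variable {A : Type u₁} {B : Type u₂} [Category.{v₁} A] [Category.{v₂} B]
variable (f : A ⥤ B)

/-- Two morphisms over the same base morphism with the same codomain have `VRel`-related
domains, and any vertical-killing functor identifies them up to `eqToHom`. -/
lemma sameCod (hf : IsGrothendieckFibration f) {a c e : A} (u : a ⟶ e) (v : c ⟶ e)
    (h : f.obj a = f.obj c) (hm : f.map u = eqToHom h ≫ f.map v) :
    VRel f a c ∧ ∀ {X : Type u₃} [Category.{v₃} X] (t : A ⥤ X), Kills f t →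
      ∃ e₁ : t.obj a = t.obj c, t.map u = eqToHom e₁ ≫ t.map v := by
  obtain ⟨d, α, hd, hα, hcart⟩ := hf e (f.obj c) (f.map v)
  obtain ⟨τv, ⟨hτv, hτvα⟩, -⟩ := hcart v (eqToHom hd.symm) (by rw [hα]; simp)
  obtain ⟨τu, ⟨hτu, hτuα⟩, -⟩ := hcart u (eqToHom (h.trans hd.symm)) (by rw [hα, hm]; simp)
  have hva : VRel f a c :=
    VRel.trans f (VRel.ofVert f ⟨τu, h.trans hd.symm, hτu⟩)
      (VRel.symm f (VRel.ofVert f ⟨τv, hd.symm, hτv⟩))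
  refine ⟨hva, ?_⟩
  intro X _ t ht
  obtain ⟨e₁, he₁⟩ := ht τu _ hτu
  obtain ⟨e₂, he₂⟩ := ht τv _ hτv
  refine ⟨e₁.trans e₂.symm, ?_⟩
  have hu' : t.map u = eqToHom e₁ ≫ t.map α := by rw [← hτuα, t.map_comp, he₁]
  have hv' : t.map v = eqToHom e₂ ≫ t.map α := by rw [← hτvα, t.map_comp, he₂]
  rw [hu', hv']
  simp


/-- Transporting a morphism `u : a ⟶ x` along `VRel f x y` on codomains. -/
def TGoal {a x : A} (u : a ⟶ x) (y : A) : Prop :=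
  ∃ (c : A) (v : c ⟶ y), VRel f a c ∧
    (∃ (h₁ : f.obj c = f.obj a) (h₂ : f.obj x = f.obj y),
      f.map v = eqToHom h₁ ≫ f.map u ≫ eqToHom h₂) ∧
    (∀ {X : Type u₃} [Category.{v₃} X] (t : A ⥤ X), Kills f t →
      ∃ (e₁ : t.obj c = t.obj a) (e₂ : t.obj x = t.obj y),
        t.map v = eqToHom e₁ ≫ t.map u ≫ eqToHom e₂)

lemma transport' (hf : IsGrothendieckFibration f) {x y : A} (hxy : VRel f x y) :
    (∀ {a : A} (u : a ⟶ x), TGoal.{v₁, v₂, v₃, u₁, u₂, u₃} f u y) ∧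
      (∀ {a : A} (u : a ⟶ y), TGoal.{v₁, v₂, v₃, u₁, u₂, u₃} f u x) := by
  induction hxy with
  | refl z =>
    constructor <;>
    · intro a u
      exact ⟨a, u, VRel.refl f, ⟨rfl, rfl, by simp⟩, fun t ht => ⟨rfl, rfl, by simp⟩⟩
  | symm x y _ ih => exact ⟨fun u => ih.2 u, fun u => ih.1 u⟩
  | trans x y z _ _ ih₁ ih₂ =>
    constructor
    · intro a u
      obtain ⟨c, v, hac, ⟨h₁, h₂, hm⟩, htc⟩ := ih₁.1 u
      obtain ⟨c', v', hcc', ⟨h₁', h₂', hm'⟩, htc'⟩ := ih₂.1 v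
      refine ⟨c', v', VRel.trans f hac hcc', ⟨h₁'.trans h₁, h₂.trans h₂', ?_⟩, ?_⟩
      · rw [hm', hm]; simp
      · intro X _ t ht
        obtain ⟨e₁, e₂, he⟩ := htc t ht
        obtain ⟨e₁', e₂', he'⟩ := htc' t ht
        exact ⟨e₁'.trans e₁, e₂.trans e₂', by rw [he', he]; simp⟩
    · intro a u
      obtain ⟨c, v, hac, ⟨h₁, h₂, hm⟩, htc⟩ := ih₂.2 u
      obtain ⟨c', v', hcc', ⟨h₁', h₂', hm'⟩, htc'⟩ := ih₁.2 v
      refine ⟨c', v', VRel.trans f hac hcc', ⟨h₁'.trans h₁, h₂.trans h₂', ?_⟩, ?_⟩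
      · rw [hm', hm]; simp
      · intro X _ t ht
        obtain ⟨e₁, e₂, he⟩ := htc t ht
        obtain ⟨e₁', e₂', he'⟩ := htc' t ht
        exact ⟨e₁'.trans e₁, e₂.trans e₂', by rw [he', he]; simp⟩
  | rel x y hw =>
    obtain ⟨w, hwo, hwm⟩ := hw
    constructor
    · intro a u
      refine ⟨a, u ≫ w, VRel.refl f, ⟨rfl, hwo, by rw [f.map_comp, hwm]; simp⟩, ?_⟩
      intro X _ t ht
      obtain ⟨ew, hew⟩ := ht w hwo hwm
      exact ⟨rfl, ew, by rw [t.map_comp, hew]; simp⟩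
    · intro a u
      obtain ⟨d, α, hd, hα, hcart⟩ := hf x (f.obj a) (f.map u ≫ eqToHom hwo.symm)
      have hαw : f.map (α ≫ w) = eqToHom hd ≫ f.map u := by
        rw [f.map_comp, hα, hwm]; simp
      obtain ⟨hda, hsc⟩ := sameCod f hf (α ≫ w) u hd hαw
      refine ⟨d, α, VRel.symm f hda, ⟨hd, hwo.symm, hα⟩, ?_⟩
      intro X _ t ht
      obtain ⟨e₁, he₁⟩ := hsc t ht
      obtain ⟨ew, hew⟩ := ht w hwo hwm
      refine ⟨e₁, ew.symm, ?_⟩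
      have : t.map α ≫ eqToHom ew = eqToHom e₁ ≫ t.map u := by
        rw [← hew, ← t.map_comp, he₁]
      calc t.map α = (t.map α ≫ eqToHom ew) ≫ eqToHom ew.symm := by simp
        _ = eqToHom e₁ ≫ t.map u ≫ eqToHom ew.symm := by rw [this]; simp


lemma transport (hf : IsGrothendieckFibration f) {x y : A} (hxy : VRel f x y)
    {a : A} (u : a ⟶ x) : TGoal.{v₁, v₂, v₃, u₁, u₂, u₃} f u y :=
  (transport'.{v₁, v₂, v₃, u₁, u₂, u₃} f hf hxy).1 u

def vsetoid : Setoid A :=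
  ⟨VRel f, ⟨fun _ => VRel.refl f, fun h => VRel.symm f h, fun h h' => VRel.trans f h h'⟩⟩

abbrev Q0 := Quotient (vsetoid f)

abbrev mkQ (a : A) : Q0 f := Quot.mk _ a

lemma mkQ_eq {a a' : A} (h : VRel f a a') : mkQ f a = mkQ f a' := Quotient.sound h

lemma mkQ_exact {a a' : A} (h : mkQ f a = mkQ f a') : VRel f a a' := Quotient.exact h

abbrev sObj : Q0 f → B := Quotient.lift f.obj (fun _ _ h => vrel_fobj f h)

lemma sObj_mk (a : A) : sObj f (mkQ f a) = f.obj a := rfl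

def P (x y : Q0 f) (β : sObj f x ⟶ sObj f y) : Prop :=
  ∃ (a a' : A) (u : a ⟶ a') (ha : mkQ f a = x) (ha' : mkQ f a' = y),
    f.map u = eqToHom (congrArg (sObj f) ha) ≫ β ≫ eqToHom (congrArg (sObj f) ha'.symm)

lemma P.id (x : Q0 f) : P f x x (𝟙 (sObj f x)) := by
  obtain ⟨a, ha⟩ := Quotient.exists_rep x
  exact ⟨a, a, 𝟙 a, ha, ha, by simp⟩

lemma P.comp (hf : IsGrothendieckFibration f) {x y z : Q0 f}
    {β : sObj f x ⟶ sObj f y} {γ : sObj f y ⟶ sObj f z}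
    (hβ : P f x y β) (hγ : P f y z γ) : P f x z (β ≫ γ) := by
  obtain ⟨a, a', u, ha, ha', hu⟩ := hβ
  obtain ⟨c, c', v, hc, hc', hv⟩ := hγ
  have hac : VRel f a' c := mkQ_exact f (ha'.trans hc.symm)
  obtain ⟨a₂, u', ha₂, ⟨h₁, h₂, hu'⟩, -⟩ := transport.{v₁, v₂, v₂, u₁, u₂, u₂} f hf hac u
  refine ⟨a₂, c', u' ≫ v, (mkQ_eq f (VRel.symm f ha₂)).trans ha, hc', ?_⟩
  rw [f.map_comp, hu', hu, hv]
  simp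

def Hom' (x y : Q0 f) : Type v₂ := {β : sObj f x ⟶ sObj f y // P f x y β}

variable (hf : IsGrothendieckFibration f)

abbrev Qcat : Category.{max v₁ v₂} (ULift.{u₂} (Q0 f)) where
  Hom x y := ULift.{v₁} (Hom' f x.down y.down)
  id x := ⟨⟨𝟙 _, P.id f x.down⟩⟩
  comp m n := ⟨⟨m.down.1 ≫ n.down.1, P.comp f hf m.down.2 n.down.2⟩⟩
  id_comp m := by cases m; exact congrArg ULift.up (Subtype.ext (by simp))
  comp_id m := by cases m; exact congrArg ULift.up (Subtype.ext (by simp))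
  assoc m n o := congrArg ULift.up (Subtype.ext (by simp))


abbrev QT (f : A ⥤ B) (_ : IsGrothendieckFibration f) : Type max u₁ u₂ :=
  ULift.{u₂} (Q0 f)

instance : Category.{max v₁ v₂} (QT f hf) := Qcat f hf

abbrev mkT (a : A) : QT f hf := ⟨mkQ f a⟩

def mkHom {x y : QT f hf} (β : sObj f x.down ⟶ sObj f y.down) (h : P f x.down y.down β) :
    x ⟶ y := ⟨⟨β, h⟩⟩

lemma hom_val {x y : QT f hf} (m : x ⟶ y) : m = mkHom f hf m.down.1 m.down.2 := rfl

lemma hom_ext {x y : QT f hf} (m m' : x ⟶ y) (h : m.down.1 = m'.down.1) : m = m' := by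
  exact congrArg ULift.up (Subtype.ext h)

@[simp] lemma comp_val {x y z : QT f hf} (m : x ⟶ y) (n : y ⟶ z) :
    (m ≫ n).down.1 = m.down.1 ≫ n.down.1 := rfl

@[simp] lemma id_val (x : QT f hf) : (𝟙 x : x ⟶ x).down.1 = 𝟙 (sObj f x.down) := rfl

@[simp] lemma mkHom_val {x y : QT f hf} (β) (h) :
    (mkHom f hf (x := x) (y := y) β h).down.1 = β := rfl

abbrev sFun : QT f hf ⥤ B where
  obj x := sObj f x.down
  map m := m.down.1
  map_id _ := rfl
  map_comp _ _ := rfl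

@[simp] lemma sFun_map {x y : QT f hf} (β) (h) :
    (sFun f hf).map (mkHom f hf (x := x) (y := y) β h) = β := rfl

abbrev qFun : A ⥤ QT f hf where
  obj a := mkT f hf a
  map {a a'} u := mkHom f hf (x := mkT f hf a) (y := mkT f hf a') (f.map u)
    ⟨a, a', u, rfl, rfl, by simp⟩
  map_id a := congrArg ULift.up (Subtype.ext (by simp))
  map_comp u v := congrArg ULift.up (Subtype.ext (by simp [mkHom]))

@[simp] lemma qFun_map_val {a a' : A} (u : a ⟶ a') :
    ((qFun f hf).map u).down.1 = f.map u := rfl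

lemma q_comp_s : qFun f hf ⋙ sFun f hf = f := rfl


lemma q_kills : Kills f (qFun f hf) := by
  intro a a' u h hu
  have e := congrArg ULift.up (mkQ_eq f (VRel.ofVert f ⟨u, h, hu⟩))
  refine ⟨e, ?_⟩
  apply hom_ext
  show f.map u = (sFun f hf).map (eqToHom e)
  rw [eqToHom_map (sFun f hf)]
  exact hu

lemma s_discrete : IsDiscreteFibration (sFun f hf) := by
  intro x b β
  obtain ⟨a', ha'⟩ := Quotient.exists_rep x.down
  have hfa' : f.obj a' = sObj f x.down := congrArg (sObj f) ha'
  obtain ⟨c, α, hc, hα, -⟩ := hf a' b (β ≫ eqToHom hfa'.symm)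
  have hx : (⟨mkQ f a'⟩ : QT f hf) = x := congrArg ULift.up ha'
  refine ⟨⟨⟨mkQ f c⟩, mkHom f hf (eqToHom hc ≫ β) ⟨c, a', α, rfl, ha', ?_⟩⟩, ⟨hc, rfl⟩, ?_⟩
  · rw [hα]; simp
  · rintro ⟨⟨z0⟩, m⟩ ⟨h', hm⟩
    obtain ⟨a₁, a₁', u₁, h₁a, h₁a', hu₁⟩ := m.down.2
    have hrel : VRel f a₁' a' := mkQ_exact f (h₁a'.trans ha'.symm)
    obtain ⟨a₃, u₃, h₁₃, ⟨k₁, k₂, hu₃⟩, -⟩ :=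
      transport.{v₁, v₂, v₂, u₁, u₂, u₂} f hf hrel u₁
    have hm' : m.down.1 = eqToHom h' ≫ β := hm
    have hsc := sameCod.{v₁, v₂, v₂, u₁, u₂, u₂} f hf u₃ α
      (k₁.trans ((congrArg (sObj f) h₁a).trans (h'.trans hc.symm)))
      (by rw [hu₃, hu₁, hm', hα]; simp)
    have hz0 : z0 = mkQ f c :=
      h₁a.symm.trans (mkQ_eq f (VRel.trans f h₁₃ hsc.1))
    subst hz0
    exact congrArg (Sigma.mk _) (hom_ext f hf m _ (by rw [hm']; rfl))


section UP

variable {X : Type u₃} [Category.{v₃} X]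

include hf in
lemma witness_eq (t : A ⥤ X) (ht : Kills f t)
    {x y : Q0 f} {β : sObj f x ⟶ sObj f y}
    {a a' c c' : A} (u : a ⟶ a') (v : c ⟶ c')
    (ha : mkQ f a = x) (ha' : mkQ f a' = y) (hc : mkQ f c = x) (hc' : mkQ f c' = y)
    (hu : f.map u = eqToHom (congrArg (sObj f) ha) ≫ β ≫ eqToHom (congrArg (sObj f) ha'.symm))
    (hv : f.map v = eqToHom (congrArg (sObj f) hc) ≫ β ≫ eqToHom (congrArg (sObj f) hc'.symm)) :
    ∃ (e₁ : t.obj a = t.obj c) (e₂ : t.obj c' = t.obj a'),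
      t.map u = eqToHom e₁ ≫ t.map v ≫ eqToHom e₂ := by
  have hrel : VRel f c' a' := mkQ_exact f (hc'.trans ha'.symm)
  obtain ⟨c₂, v₂, hcc₂, ⟨k₁, k₂, hv₂⟩, htc⟩ :=
    transport.{v₁, v₂, v₃, u₁, u₂, u₃} f hf hrel v
  have hsc := sameCod.{v₁, v₂, v₃, u₁, u₂, u₃} f hf u v₂
    (((congrArg (sObj f) ha).trans (congrArg (sObj f) hc).symm).trans k₁.symm)
    (by rw [hv₂, hv, hu]; simp)
  obtain ⟨e, he⟩ := hsc.2 t ht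
  obtain ⟨e₁', e₂', he'⟩ := htc t ht
  exact ⟨e.trans e₁', e₂', by rw [he, he']; simp⟩

noncomputable def wit {x y : Q0 f} {β : sObj f x ⟶ sObj f y} (h : P f x y β) :
    Σ' (a a' : A) (u : a ⟶ a') (ha : mkQ f a = x) (ha' : mkQ f a' = y),
      f.map u = eqToHom (congrArg (sObj f) ha) ≫ β ≫ eqToHom (congrArg (sObj f) ha'.symm) :=
  Classical.choice (by obtain ⟨a, a', u, ha, ha', hu⟩ := h; exact ⟨⟨a, a', u, ha, ha', hu⟩⟩)

abbrev tObj (t : A ⥤ X) (ht : Kills f t) : Q0 f → X :=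
  Quotient.lift t.obj (fun _ _ h => kills_obj f ht h)

noncomputable def tMap (t : A ⥤ X) (ht : Kills f t) {x y : QT f hf} (m : x ⟶ y) :
    tObj f t ht x.down ⟶ tObj f t ht y.down :=
  eqToHom (congrArg (tObj f t ht) (wit f m.down.2).2.2.2.1).symm ≫
    t.map (wit f m.down.2).2.2.1 ≫
      eqToHom (congrArg (tObj f t ht) (wit f m.down.2).2.2.2.2.1)

lemma tMap_eq (t : A ⥤ X) (ht : Kills f t) {x y : QT f hf} (m : x ⟶ y)
    {a a' : A} (u : a ⟶ a') (ha : mkQ f a = x.down) (ha' : mkQ f a' = y.down)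
    (hu : f.map u = eqToHom (congrArg (sObj f) ha) ≫ m.down.1 ≫
      eqToHom (congrArg (sObj f) ha'.symm)) :
    tMap f hf t ht m =
      eqToHom (congrArg (tObj f t ht) ha).symm ≫ t.map u ≫
        eqToHom (congrArg (tObj f t ht) ha') := by
  obtain ⟨e₁, e₂, he⟩ := witness_eq f hf t ht (wit f m.down.2).2.2.1 u
    (wit f m.down.2).2.2.2.1 (wit f m.down.2).2.2.2.2.1 ha ha'
    (wit f m.down.2).2.2.2.2.2 hu
  unfold tMap
  rw [he]
  simp


noncomputable abbrev tFun (t : A ⥤ X) (ht : Kills f t) : QT f hf ⥤ X where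
  obj x := tObj f t ht x.down
  map m := tMap f hf t ht m
  map_id x := by
    obtain ⟨x0⟩ := x
    obtain ⟨a, ha⟩ := Quotient.exists_rep x0
    subst ha
    show tMap f hf t ht (𝟙 (mkT f hf a)) = _
    rw [tMap_eq f hf t ht (𝟙 (mkT f hf a)) (𝟙 a) rfl rfl (by simp)]
    simp
  map_comp {x y z} m n := by
    obtain ⟨a, a', u, ha, ha', hu⟩ := m.down.2
    obtain ⟨c, c', v, hc, hc', hv⟩ := n.down.2
    have hrel : VRel f a' c := mkQ_exact f (ha'.trans hc.symm)
    obtain ⟨a₂, u', ha₂, ⟨h₁, h₂, hu'⟩, htc⟩ :=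
      transport.{v₁, v₂, v₃, u₁, u₂, u₃} f hf hrel u
    obtain ⟨e₁, e₂, he⟩ := htc t ht
    show tMap f hf t ht (m ≫ n) = tMap f hf t ht m ≫ tMap f hf t ht n
    rw [tMap_eq f hf t ht (m ≫ n) (u' ≫ v) ((mkQ_eq f (VRel.symm f ha₂)).trans ha) hc'
        (by rw [f.map_comp, hu', hu, hv]; simp),
      tMap_eq f hf t ht m u ha ha' hu, tMap_eq f hf t ht n v hc hc' hv, t.map_comp, he]
    simp

lemma q_comp_t (t : A ⥤ X) (ht : Kills f t) : qFun f hf ⋙ tFun f hf t ht = t := by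
  refine CategoryTheory.Functor.ext (fun a => rfl) ?_
  intro a a' u
  show tMap f hf t ht ((qFun f hf).map u) = _
  rw [tMap_eq f hf t ht ((qFun f hf).map u) u rfl rfl (by simp; rfl)]

lemma t_unique (t : A ⥤ X) (ht : Kills f t) (t₁ : QT f hf ⥤ X)
    (H : qFun f hf ⋙ t₁ = t) : t₁ = tFun f hf t ht := by
  have hobj : ∀ x : QT f hf, t₁.obj x = (tFun f hf t ht).obj x := by
    intro x
    obtain ⟨a, ha⟩ := Quotient.exists_rep x.down
    have hx : mkT f hf a = x := congrArg ULift.up ha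
    rw [← hx]
    exact Functor.congr_obj H a
  refine CategoryTheory.Functor.ext hobj ?_
  intro x y m
  obtain ⟨a, a', u, ha, ha', hu⟩ := m.down.2
  have hx : mkT f hf a = x := congrArg ULift.up ha
  have hy : mkT f hf a' = y := congrArg ULift.up ha'
  have hm : m = eqToHom hx.symm ≫ (qFun f hf).map u ≫ eqToHom hy := by
    apply hom_ext
    show m.down.1 =
      (sFun f hf).map (eqToHom hx.symm) ≫ f.map u ≫ (sFun f hf).map (eqToHom hy)
    rw [eqToHom_map (sFun f hf), eqToHom_map (sFun f hf), hu]
    simp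
  have hq := Functor.congr_hom H u
  rw [show (tFun f hf t ht).map m = _ from tMap_eq f hf t ht m u ha ha' hu,
    hm, t₁.map_comp, t₁.map_comp, eqToHom_map t₁, eqToHom_map t₁,
    show t₁.map ((qFun f hf).map u) = (qFun f hf ⋙ t₁).map u from rfl, hq]
  simp

end UP

end Stmt13Aux


/-- For a Grothendieck fibration `f : A ⥤ B`, identifying in each fibre the objects lying in
the same connected component (i.e. applying `π₀` fibrewise to the associated pseudofunctor)
yields a category `Q` with a canonical functor `q : A ⥤ Q` (the coidentifier of the
`f`-vertical morphisms: `q` kills them and is universal with this property) and a comparison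
functor `s : Q ⥤ B` which is a discrete fibration and satisfies `s ∘ q = f`. -/
theorem stmt13 {A : Type u₁} {B : Type u₂} [Category.{v₁} A] [Category.{v₂} B]
    (f : A ⥤ B) (hf : IsGrothendieckFibration f) :
    ∃ (Q : Cat.{max v₁ v₂, max u₁ u₂}) (q : A ⥤ Q) (s : Q ⥤ B),
      q ⋙ s = f ∧
      IsDiscreteFibration s ∧
      (∀ {a a' : A} (u : a ⟶ a') (h : f.obj a = f.obj a'), f.map u = eqToHom h →
        ∃ e : q.obj a = q.obj a', q.map u = eqToHom e) ∧
      (∀ {X : Type u₃} [Category.{v₃} X] (t : A ⥤ X),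
        (∀ {a a' : A} (u : a ⟶ a') (h : f.obj a = f.obj a'), f.map u = eqToHom h →
          ∃ e : t.obj a = t.obj a', t.map u = eqToHom e) →
        ∃! t' : Q ⥤ X, q ⋙ t' = t) := by
  exact ⟨Cat.of (Stmt13Aux.QT f hf), Stmt13Aux.qFun f hf, Stmt13Aux.sFun f hf,
    Stmt13Aux.q_comp_s f hf, Stmt13Aux.s_discrete f hf,
    fun u h hu => Stmt13Aux.q_kills f hf u h hu,
    fun {X} _ t ht => ⟨Stmt13Aux.tFun f hf t ht, Stmt13Aux.q_comp_t f hf t ht,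
      fun t₁ H => Stmt13Aux.t_unique f hf t ht t₁ H⟩⟩
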